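/- Under Assumptions 1 and 2, the functions f_ℓ(x) = g_ℓ(x) - g_{ℓ-1}(x) with g_ℓ(x) = u(x,…,x) (ℓ times) satisfy f_ℓ(x) ≥ f_{ℓ+1}(x) for all x ≥ 0 and all ℓ ≥ 1. -/

import Mathlib

open scoped NNReal

/-- `u` is symmetric: invariant under permutations of its arguments. -/
def IsSymmU (u : List ℝ≥0 → ℝ) : Prop := ∀ l l' : List ℝ≥0, l.Perm l' → u l = u l'

/-- `u` is nondecreasing in each argument. -/
def IsMonoU (u : List ℝ≥0 → ℝ) : Prop :=
  ∀ l l' : List ℝ≥0, List.Forall₂ (· ≤ ·) l l' → u l ≤ u l'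

/-- `u` is submodular: `u(x∧y)+u(x∨y) ≤ u(x)+u(y)` for equal-length tuples. -/
def IsSubmodU (u : List ℝ≥0 → ℝ) : Prop := ∀ l l' : List ℝ≥0, l.length = l'.length →
  u (List.zipWith min l l') + u (List.zipWith max l l') ≤ u l + u l'

/-- `u` is continuous on tuples of each fixed length. -/
def IsContU (u : List ℝ≥0 → ℝ) : Prop :=
  ∀ n : ℕ, Continuous (fun v : Fin n → ℝ≥0 => u (List.ofFn v))

/-- Assumption 1: `u(∅)=0`, prepending a zero leaves `u` unchanged, `u` nonnegative,
continuous, symmetric, nondecreasing and submodular. -/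
def Assumption1 (u : List ℝ≥0 → ℝ) : Prop :=
  u [] = 0 ∧ (∀ l, u (0 :: l) = u l) ∧ (∀ l, 0 ≤ u l) ∧
    IsContU u ∧ IsSymmU u ∧ IsMonoU u ∧ IsSubmodU u

/-- Assumption 2: the benefit of raising an argument from `0` to `xi` does not
depend on the values of other arguments exceeding `xi`. -/
def Assumption2 (u : List ℝ≥0 → ℝ) : Prop :=
  ∀ (l : List ℝ≥0) (xi xlo xhi : ℝ≥0), xi ≤ xlo → xlo < xhi →
    u (l ++ [xhi, xi]) - u (l ++ [xhi, 0]) = u (l ++ [xlo, xi]) - u (l ++ [xlo, 0])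

/-- Lemma 2(b), decrease in `ℓ`: under Assumptions 1 and 2,
`f_ℓ(x) ≥ f_{ℓ+1}(x)` for all `x` and all `ℓ ≥ 1`. -/
theorem stmt_6 (u : List ℝ≥0 → ℝ) (hA1 : Assumption1 u) (hA2 : Assumption2 u)
    (ℓ : ℕ) (hℓ : 1 ≤ ℓ) (x : ℝ≥0) :
    u (List.replicate (ℓ + 1) x) - u (List.replicate ℓ x) ≤
      u (List.replicate ℓ x) - u (List.replicate (ℓ - 1) x) := by
  obtain ⟨k, rfl⟩ := Nat.exists_eq_add_of_le hℓ
  obtain ⟨h0, hzero, hnn, hcont, hsymm, hmono, hsub⟩ := hA1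
  set r : List ℝ≥0 := List.replicate k x with hr
  have key := hsub (r ++ [x, 0]) (r ++ [0, x]) (by simp)
  have hmin : List.zipWith min (r ++ [x, 0]) (r ++ [0, x]) = r ++ [0, 0] := by
    rw [List.zipWith_append (l₁ := r) (l₂ := r) rfl]
    simp [hr, List.zipWith_self]
  have hmax : List.zipWith max (r ++ [x, 0]) (r ++ [0, x]) = r ++ [x, x] := by
    rw [List.zipWith_append (l₁ := r) (l₂ := r) rfl]
    simp [hr, List.zipWith_self]
  rw [hmin, hmax] at key
  have e1 : u (r ++ [0, 0]) = u (List.replicate k x) := by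
    have : u (r ++ [0, 0]) = u (0 :: 0 :: r) := hsymm _ _ (by
      simpa using (List.perm_append_comm (l₁ := r) (l₂ := [0, 0])))
    rw [this, hzero, hzero]
  have e2 : u (r ++ [x, x]) = u (List.replicate (k + 2) x) := by
    congr 1
    rw [show k + 2 = k + 1 + 1 from rfl]
    simp [hr, List.replicate_succ' (n := k + 1), List.replicate_succ' (n := k)]
  have e3 : u (r ++ [x, 0]) = u (List.replicate (k + 1) x) := by
    have : u (r ++ [x, 0]) = u (0 :: (r ++ [x])) := hsymm _ _ (by
      refine List.Perm.trans ?_ (List.perm_append_comm (l₁ := r ++ [x]) (l₂ := [0]))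
      simp)
    rw [this, hzero]
    congr 1
    simp [hr, List.replicate_succ' (n := k)]
  have e4 : u (r ++ [0, x]) = u (List.replicate (k + 1) x) := by
    have : u (r ++ [0, x]) = u (0 :: (r ++ [x])) := hsymm _ _ (by
      refine List.Perm.trans ?_ (List.Perm.cons 0 (List.Perm.refl _))
      simp [List.perm_comm])
    rw [this, hzero]
    congr 1
    simp [hr, List.replicate_succ' (n := k)]
  rw [e1, e2, e3, e4] at key
  simp only [Nat.add_comm 1 k, Nat.add_sub_cancel]
  linarith
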